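/- For all x3, x4, x5 ≥ 0 and x7 > 0, the determinant of the 2×2 matrix with rows (∂v_e/∂x3, ∂μ/∂x3) and (∂v_e/∂x4, ∂μ/∂x4) equals (a2·b1 − a1·b2)·(∂v_g/∂x3)·(∂v_z/∂x4), where moreover ∂v_g/∂x3 > 0 and ∂v_z/∂x4 > 0 at such points; consequently this determinant is nonzero if and only if a1·b2 − a2·b1 ≠ 0. -/
import Mathlib


open MeasureTheory Set

/-- Positive constants of the bioreactor uptake kinetics. -/
structure BioParams where
  vgmax : ℝ
  vzmax : ℝ
  kg : ℝ
  kieg : ℝ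
  kz : ℝ
  kiez : ℝ
  kig : ℝ
  vgmax_pos : 0 < vgmax
  vzmax_pos : 0 < vzmax
  kg_pos : 0 < kg
  kieg_pos : 0 < kieg
  kz_pos : 0 < kz
  kiez_pos : 0 < kiez
  kig_pos : 0 < kig

/-- Glucose uptake rate `v_g(x3,x5,x7)`. -/
noncomputable def vg (P : BioParams) (x3 x5 x7 : ℝ) : ℝ :=
  P.vgmax * x3 * x7 / ((P.kg * x7 + x3) * (x7 + x5 / P.kieg))

/-- Xylose uptake rate `v_z(x3,x4,x5,x7)`. -/
noncomputable def vz (P : BioParams) (x3 x4 x5 x7 : ℝ) : ℝ :=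
  P.vzmax * x4 * x7 ^ 2 /
    ((P.kz * x7 + x4) * (x7 + x3 / P.kig) * (x7 + x5 / P.kiez))

/-- Coefficients of the affine growth rate and ethanol flux:
`μ = a1 v_g + a2 v_z + μ̄`, `v_e = b1 v_g + b2 v_z + v̄`. -/
structure AffineCoeffs where
  a1 : ℝ
  a2 : ℝ
  b1 : ℝ
  b2 : ℝ
  mubar : ℝ
  vbar : ℝ
  a1_pos : 0 < a1
  a2_pos : 0 < a2
  b1_pos : 0 < b1
  b2_pos : 0 < b2
  mubar_pos : 0 < mubar

/-- Biomass growth rate `μ`. -/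
noncomputable def mu (P : BioParams) (C : AffineCoeffs) (x3 x4 x5 x7 : ℝ) : ℝ :=
  C.a1 * vg P x3 x5 x7 + C.a2 * vz P x3 x4 x5 x7 + C.mubar

/-- Ethanol flux `v_e`. -/
noncomputable def ve (P : BioParams) (C : AffineCoeffs) (x3 x4 x5 x7 : ℝ) : ℝ :=
  C.b1 * vg P x3 x5 x7 + C.b2 * vz P x3 x4 x5 x7 + C.vbar

/-- `∂v_g/∂x3`. -/
noncomputable def dvg_dx3 (P : BioParams) (x3 x5 x7 : ℝ) : ℝ :=
  deriv (fun y => vg P y x5 x7) x3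

/-- `∂v_g/∂x5`. -/
noncomputable def dvg_dx5 (P : BioParams) (x3 x5 x7 : ℝ) : ℝ :=
  deriv (fun y => vg P x3 y x7) x5

/-- `∂v_g/∂x7`. -/
noncomputable def dvg_dx7 (P : BioParams) (x3 x5 x7 : ℝ) : ℝ :=
  deriv (fun y => vg P x3 x5 y) x7

/-- `∂v_z/∂x3`. -/
noncomputable def dvz_dx3 (P : BioParams) (x3 x4 x5 x7 : ℝ) : ℝ :=
  deriv (fun y => vz P y x4 x5 x7) x3

/-- `∂v_z/∂x4`. -/
noncomputable def dvz_dx4 (P : BioParams) (x3 x4 x5 x7 : ℝ) : ℝ :=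
  deriv (fun y => vz P x3 y x5 x7) x4

/-- `∂v_z/∂x5`. -/
noncomputable def dvz_dx5 (P : BioParams) (x3 x4 x5 x7 : ℝ) : ℝ :=
  deriv (fun y => vz P x3 x4 y x7) x5

/-- `∂v_z/∂x7`. -/
noncomputable def dvz_dx7 (P : BioParams) (x3 x4 x5 x7 : ℝ) : ℝ :=
  deriv (fun y => vz P x3 x4 x5 y) x7

/-- `∂μ/∂x3`. -/
noncomputable def dmu_dx3 (P : BioParams) (C : AffineCoeffs) (x3 x4 x5 x7 : ℝ) : ℝ :=
  deriv (fun y => mu P C y x4 x5 x7) x3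

/-- `∂μ/∂x4`. -/
noncomputable def dmu_dx4 (P : BioParams) (C : AffineCoeffs) (x3 x4 x5 x7 : ℝ) : ℝ :=
  deriv (fun y => mu P C x3 y x5 x7) x4

/-- `∂μ/∂x5`. -/
noncomputable def dmu_dx5 (P : BioParams) (C : AffineCoeffs) (x3 x4 x5 x7 : ℝ) : ℝ :=
  deriv (fun y => mu P C x3 x4 y x7) x5

/-- `∂μ/∂x7`. -/
noncomputable def dmu_dx7 (P : BioParams) (C : AffineCoeffs) (x3 x4 x5 x7 : ℝ) : ℝ :=
  deriv (fun y => mu P C x3 x4 x5 y) x7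

/-- `∂v_e/∂x3`. -/
noncomputable def dve_dx3 (P : BioParams) (C : AffineCoeffs) (x3 x4 x5 x7 : ℝ) : ℝ :=
  deriv (fun y => ve P C y x4 x5 x7) x3

/-- `∂v_e/∂x4`. -/
noncomputable def dve_dx4 (P : BioParams) (C : AffineCoeffs) (x3 x4 x5 x7 : ℝ) : ℝ :=
  deriv (fun y => ve P C x3 y x5 x7) x4

/-- `∂v_e/∂x5`. -/
noncomputable def dve_dx5 (P : BioParams) (C : AffineCoeffs) (x3 x4 x5 x7 : ℝ) : ℝ :=
  deriv (fun y => ve P C x3 x4 y x7) x5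

/-- `∂v_e/∂x7`. -/
noncomputable def dve_dx7 (P : BioParams) (C : AffineCoeffs) (x3 x4 x5 x7 : ℝ) : ℝ :=
  deriv (fun y => ve P C x3 x4 x5 y) x7

/-- for `x3, x4, x5 ≥ 0` and `x7 > 0`, the determinant of the matrix with
rows `(∂v_e/∂x3, ∂μ/∂x3)` and `(∂v_e/∂x4, ∂μ/∂x4)` equals
`(a2 b1 - a1 b2) ∂v_g/∂x3 ∂v_z/∂x4`, with `∂v_g/∂x3 > 0` and `∂v_z/∂x4 > 0`;
consequently the determinant is nonzero iff `a1 b2 - a2 b1 ≠ 0`. -/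
theorem stmt1 (P : BioParams) (C : AffineCoeffs) (x3 x4 x5 x7 : ℝ)
    (h3 : 0 ≤ x3) (h4 : 0 ≤ x4) (h5 : 0 ≤ x5) (h7 : 0 < x7) :
    dve_dx3 P C x3 x4 x5 x7 * dmu_dx4 P C x3 x4 x5 x7 -
        dmu_dx3 P C x3 x4 x5 x7 * dve_dx4 P C x3 x4 x5 x7 =
      (C.a2 * C.b1 - C.a1 * C.b2) * dvg_dx3 P x3 x5 x7 * dvz_dx4 P x3 x4 x5 x7 ∧
    0 < dvg_dx3 P x3 x5 x7 ∧ 0 < dvz_dx4 P x3 x4 x5 x7 ∧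
    (dve_dx3 P C x3 x4 x5 x7 * dmu_dx4 P C x3 x4 x5 x7 -
        dmu_dx3 P C x3 x4 x5 x7 * dve_dx4 P C x3 x4 x5 x7 ≠ 0 ↔
      C.a1 * C.b2 - C.a2 * C.b1 ≠ 0) := by
  have hkg := P.kg_pos; have hkieg := P.kieg_pos; have hkz := P.kz_pos
  have hkiez := P.kiez_pos; have hkig := P.kig_pos
  have hvgm := P.vgmax_pos; have hvzm := P.vzmax_pos
  have hc5g : 0 < x7 + x5 / P.kieg := by positivity
  have hc3 : 0 < x7 + x3 / P.kig := by positivity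
  have hc5z : 0 < x7 + x5 / P.kiez := by positivity
  have hDg : 0 < (P.kg * x7 + x3) * (x7 + x5 / P.kieg) := by positivity
  have hDz : 0 < (P.kz * x7 + x4) * (x7 + x3 / P.kig) * (x7 + x5 / P.kiez) := by positivity
  -- derivative of vg in x3
  have hvg3 := (((hasDerivAt_id x3).const_mul P.vgmax).mul_const x7).div
      (((hasDerivAt_id x3).const_add (P.kg * x7)).mul_const (x7 + x5 / P.kieg)) hDg.ne'
  simp only [id_eq] at hvg3
  have hG : dvg_dx3 P x3 x5 x7 =
      (P.vgmax * 1 * x7 * ((P.kg * x7 + x3) * (x7 + x5 / P.kieg)) -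
        P.vgmax * x3 * x7 * (1 * (x7 + x5 / P.kieg))) /
        ((P.kg * x7 + x3) * (x7 + x5 / P.kieg)) ^ 2 := hvg3.deriv
  -- derivative of vz in x4
  have hvz4 := (((hasDerivAt_id x4).const_mul P.vzmax).mul_const (x7 ^ 2)).div
      ((((hasDerivAt_id x4).const_add (P.kz * x7)).mul_const (x7 + x3 / P.kig)).mul_const
        (x7 + x5 / P.kiez)) hDz.ne'
  simp only [id_eq] at hvz4
  have hZ4 : dvz_dx4 P x3 x4 x5 x7 =
      (P.vzmax * 1 * x7 ^ 2 * ((P.kz * x7 + x4) * (x7 + x3 / P.kig) * (x7 + x5 / P.kiez)) -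
        P.vzmax * x4 * x7 ^ 2 * (1 * (x7 + x3 / P.kig) * (x7 + x5 / P.kiez))) /
        ((P.kz * x7 + x4) * (x7 + x3 / P.kig) * (x7 + x5 / P.kiez)) ^ 2 := hvz4.deriv
  -- derivative of vz in x3
  have hvz3 := (hasDerivAt_const x3 (P.vzmax * x4 * x7 ^ 2)).div
      (((((hasDerivAt_id x3).div_const P.kig).const_add x7).const_mul
        (P.kz * x7 + x4)).mul_const (x7 + x5 / P.kiez)) hDz.ne'
  simp only [id_eq] at hvz3
  -- derivatives of mu and ve in x3
  have hmu3 : dmu_dx3 P C x3 x4 x5 x7 =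
      C.a1 * dvg_dx3 P x3 x5 x7 + C.a2 * dvz_dx3 P x3 x4 x5 x7 := by
    have h := ((hvg3.const_mul C.a1).add (hvz3.const_mul C.a2)).add_const C.mubar
    have h3' : dvz_dx3 P x3 x4 x5 x7 = _ := hvz3.deriv
    have hd : deriv (fun y => mu P C y x4 x5 x7) x3 = _ := h.deriv
    rw [dmu_dx3, hd, hG, h3']
  have hve3 : dve_dx3 P C x3 x4 x5 x7 =
      C.b1 * dvg_dx3 P x3 x5 x7 + C.b2 * dvz_dx3 P x3 x4 x5 x7 := by
    have h := ((hvg3.const_mul C.b1).add (hvz3.const_mul C.b2)).add_const C.vbar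
    have h3' : dvz_dx3 P x3 x4 x5 x7 = _ := hvz3.deriv
    have hd : deriv (fun y => ve P C y x4 x5 x7) x3 = _ := h.deriv
    rw [dve_dx3, hd, hG, h3']
  -- derivatives of mu and ve in x4
  have hmu4 : dmu_dx4 P C x3 x4 x5 x7 = C.a2 * dvz_dx4 P x3 x4 x5 x7 := by
    have h := (((hasDerivAt_const x4 (vg P x3 x5 x7)).const_mul C.a1).add
      (hvz4.const_mul C.a2)).add_const C.mubar
    have hd : deriv (fun y => mu P C x3 y x5 x7) x4 = _ := h.deriv
    rw [dmu_dx4, hd, hZ4]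
    ring
  have hve4 : dve_dx4 P C x3 x4 x5 x7 = C.b2 * dvz_dx4 P x3 x4 x5 x7 := by
    have h := (((hasDerivAt_const x4 (vg P x3 x5 x7)).const_mul C.b1).add
      (hvz4.const_mul C.b2)).add_const C.vbar
    have hd : deriv (fun y => ve P C x3 y x5 x7) x4 = _ := h.deriv
    rw [dve_dx4, hd, hZ4]
    ring
  -- positivity
  have hGpos : 0 < dvg_dx3 P x3 x5 x7 := by
    rw [hG, show (P.vgmax * 1 * x7 * ((P.kg * x7 + x3) * (x7 + x5 / P.kieg)) -
        P.vgmax * x3 * x7 * (1 * (x7 + x5 / P.kieg))) =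
        P.vgmax * P.kg * x7 ^ 2 * (x7 + x5 / P.kieg) from by ring]
    positivity
  have hZ4pos : 0 < dvz_dx4 P x3 x4 x5 x7 := by
    rw [hZ4, show (P.vzmax * 1 * x7 ^ 2 * ((P.kz * x7 + x4) * (x7 + x3 / P.kig) * (x7 + x5 / P.kiez)) -
        P.vzmax * x4 * x7 ^ 2 * (1 * (x7 + x3 / P.kig) * (x7 + x5 / P.kiez))) =
        P.vzmax * P.kz * x7 ^ 3 * ((x7 + x3 / P.kig) * (x7 + x5 / P.kiez)) from by ring]
    positivity
  have hdet : dve_dx3 P C x3 x4 x5 x7 * dmu_dx4 P C x3 x4 x5 x7 -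
      dmu_dx3 P C x3 x4 x5 x7 * dve_dx4 P C x3 x4 x5 x7 =
      (C.a2 * C.b1 - C.a1 * C.b2) * dvg_dx3 P x3 x5 x7 * dvz_dx4 P x3 x4 x5 x7 := by
    rw [hmu3, hve3, hmu4, hve4]; ring
  refine ⟨hdet, hGpos, hZ4pos, ?_⟩
  rw [hdet]
  constructor
  · intro h hc
    apply h
    rw [show C.a2 * C.b1 - C.a1 * C.b2 = -(C.a1 * C.b2 - C.a2 * C.b1) from by ring, hc]
    ring
  · intro h hc
    apply h
    have h1 : C.a2 * C.b1 - C.a1 * C.b2 = 0 := by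
      rcases mul_eq_zero.1 hc with h' | h'
      · rcases mul_eq_zero.1 h' with h'' | h''
        · exact h''
        · exact absurd h'' hGpos.ne'
      · exact absurd h' hZ4pos.ne'
    linarith
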